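/- The functions η = y(x+r)/x² and ξ = -x/(2r) - r/(2x) are invariant under the involution φ(x,y) = (r²/x, r³y/x³), and if y² = x(x²-4x+4+4t)(x²+4x+4+4t) with x ≠ 0 then η² = -8r³(ξ-1)(ξ² - 1/(t+1)). -/

import Mathlib

/-- η = y(x+r)/x², ξ = -x/(2r) - r/(2x) are φ-invariant and satisfy the
    equation of the quotient elliptic curve F_t. -/
theorem stmt_13 {K : Type*} [Field K] (h2 : (2 : K) ≠ 0) (t r x y : K)
    (ht : t ≠ -1) (hr : r ^ 2 = 4 + 4 * t) (hr0 : r ≠ 0) (hx : x ≠ 0)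
    (h : y ^ 2 = x * (x ^ 2 - 4 * x + 4 + 4 * t) * (x ^ 2 + 4 * x + 4 + 4 * t)) :
    ((r ^ 3 * y / x ^ 3) * ((r ^ 2 / x) + r) / (r ^ 2 / x) ^ 2 =
        y * (x + r) / x ^ 2) ∧
    (-(r ^ 2 / x) / (2 * r) - r / (2 * (r ^ 2 / x)) =
        -x / (2 * r) - r / (2 * x)) ∧
    ((y * (x + r) / x ^ 2) ^ 2 =
      -8 * r ^ 3 * ((-x / (2 * r) - r / (2 * x)) - 1) *
        ((-x / (2 * r) - r / (2 * x)) ^ 2 - 1 / (t + 1))) := by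
  have ht1 : t + 1 ≠ 0 := fun hh => ht (by linear_combination hh)
  refine ⟨by field_simp; ring, by field_simp; ring, ?_⟩
  have h4 : (4 : K) ≠ 0 := fun hh => h2 (mul_self_eq_zero.mp (by linear_combination hh))
  have e1 : (-x / (2 * r) - r / (2 * x)) - 1 = -(x + r) ^ 2 / (2 * r * x) := by
    field_simp; ring
  have e2 : (-x / (2 * r) - r / (2 * x)) ^ 2 - 1 / (t + 1) =
      (x ^ 2 - 4 * x + 4 + 4 * t) * (x ^ 2 + 4 * x + 4 + 4 * t) / (4 * r ^ 2 * x ^ 2) := by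
    field_simp
    linear_combination (4 * (t + 1) * (2 * x ^ 2 + r ^ 2 + 4 + 4 * t) - 16 * x ^ 2) * hr
  rw [e1, e2]
  field_simp
  linear_combination (8 * (x + r) ^ 2) * h
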